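/- Define the kernel Λ_u(x_1,…,x_N; y_1,…,y_{N−1}) = exp{(i/ħ)u(Σ_{n=1}^N x_n − Σ_{n=1}^{N−1} y_n) − (1/ħ)Σ_{n=1}^{N−1}(e^{y_n−x_{n+1}} + e^{x_n−y_n})}. Then for each m with 0 ≤ m ≤ N−1, the operator A_m(u) (acting on the x-variables) satisfies A_m(u) Λ_u(x;y) = (−i)^m exp(Σ_{j=1}^m (x_j − y_j)) · Λ_u(x;y). -/

import Mathlib

noncomputable section

open Complex

/-- Complex-valued functions of countably many real coordinates `x 1, x 2, …`. -/
abbrev TodaFun := (ℕ → ℝ) → ℂ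

/-- The momentum operator of the `n`-th particle, `p_n = −iħ ∂/∂x_n`. -/
def pOp (hbar : ℝ) (n : ℕ) (f : TodaFun) : TodaFun :=
  fun x => (-Complex.I * hbar) * deriv (fun t : ℝ => f (Function.update x n t)) (x n)

/-- The Lax matrix `L_n(u) = [[u − p_n, e^{−x_n}], [−e^{x_n}, 0]]`,
as a 2×2 matrix of operators on functions. -/
def Lax (hbar : ℝ) (u : ℂ) (n : ℕ) : Fin 2 → Fin 2 → (TodaFun → TodaFun) :=
  ![![fun f x => u * f x - pOp hbar n f x, fun f x => (Real.exp (-(x n)) : ℂ) * f x],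
    ![fun f x => (-Real.exp (x n) : ℝ) * f x, fun _ _ => 0]]

/-- Product of 2×2 matrices of operators: `(AB)_{ij} f = A_{i0}(B_{0j} f) + A_{i1}(B_{1j} f)`. -/
def mulOp (A B : Fin 2 → Fin 2 → (TodaFun → TodaFun)) : Fin 2 → Fin 2 → (TodaFun → TodaFun) :=
  fun i j f x => A i 0 (B 0 j f) x + A i 1 (B 1 j f) x

/-- The monodromy matrix `T_N(u) = L_N(u) ⋯ L_1(u)`, with `T_0 = Id`. -/
def Tmat (hbar : ℝ) (u : ℂ) : ℕ → (Fin 2 → Fin 2 → (TodaFun → TodaFun))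
  | 0 => ![![fun f => f, fun _ _ => 0], ![fun _ _ => 0, fun f => f]]
  | (n + 1) => mulOp (Lax hbar u (n + 1)) (Tmat hbar u n)

/-- `A_N(u)`: the (1,1) entry of the monodromy matrix. -/
def Aop (hbar : ℝ) (u : ℂ) (N : ℕ) : TodaFun → TodaFun := Tmat hbar u N 0 0

/-- `B_N(u)`: the (1,2) entry of the monodromy matrix. -/
def Bop (hbar : ℝ) (u : ℂ) (N : ℕ) : TodaFun → TodaFun := Tmat hbar u N 0 1

/-- `C_N(u)`: the (2,1) entry of the monodromy matrix. -/
def Cop (hbar : ℝ) (u : ℂ) (N : ℕ) : TodaFun → TodaFun := Tmat hbar u N 1 0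

/-- `D_N(u)`: the (2,2) entry of the monodromy matrix. -/
def Dop (hbar : ℝ) (u : ℂ) (N : ℕ) : TodaFun → TodaFun := Tmat hbar u N 1 1

/-- The kernel
`Λ_u(x;y) = exp{(i/ħ)u(Σ_{n=1}^N x_n − Σ_{n=1}^{N−1} y_n)
  − (1/ħ)Σ_{n=1}^{N−1}(e^{y_n−x_{n+1}} + e^{x_n−y_n})}`. -/
def LamKer (hbar : ℝ) (N : ℕ) (u : ℂ) (y : ℕ → ℝ) : TodaFun :=
  fun x => Complex.exp (Complex.I * u / hbar
    * (((∑ n ∈ Finset.Icc 1 N, x n) - ∑ n ∈ Finset.Icc 1 (N - 1), y n : ℝ) : ℂ)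
    - ((1 / hbar) * ∑ n ∈ Finset.Icc 1 (N - 1),
        (Real.exp (y n - x (n + 1)) + Real.exp (x n - y n)) : ℝ))

/-! ### Auxiliary lemmas -/

lemma Aop_zero' (hbar : ℝ) (u : ℂ) (f : TodaFun) : Aop hbar u 0 f = f := rfl

lemma Cop_zero' (hbar : ℝ) (u : ℂ) (f : TodaFun) (x : ℕ → ℝ) : Cop hbar u 0 f x = 0 := rfl

lemma Aop_succ' (hbar : ℝ) (u : ℂ) (n : ℕ) (f : TodaFun) (x : ℕ → ℝ) :
    Aop hbar u (n+1) f x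
      = u * Aop hbar u n f x - pOp hbar (n+1) (Aop hbar u n f) x
        + (Real.exp (-(x (n+1))) : ℝ) * Cop hbar u n f x := by
  simp [Aop, Cop, Tmat, mulOp, Lax]

lemma Cop_succ' (hbar : ℝ) (u : ℂ) (n : ℕ) (f : TodaFun) (x : ℕ → ℝ) :
    Cop hbar u (n+1) f x = (-Real.exp (x (n+1)) : ℝ) * Aop hbar u n f x := by
  simp [Aop, Cop, Tmat, mulOp, Lax]

lemma LamKer_update (hbar : ℝ) (N : ℕ) (u : ℂ) (y x : ℕ → ℝ) (m : ℕ)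
    (hm1 : 1 ≤ m) (hm : m ≤ N - 1) :
    ∃ S C a : ℝ, (∀ s : ℝ, a * Real.exp (-s) = if 2 ≤ m then Real.exp (y (m-1) - s) else 0) ∧
      ∀ t : ℝ, LamKer hbar N u y (Function.update x m t)
        = Complex.exp (Complex.I * u / hbar * ((S + t : ℝ) : ℂ)
            - (((1/hbar) * (C + a * Real.exp (-t) + Real.exp (t - y m)) : ℝ) : ℂ)) := by
  have hN : 2 ≤ N := by omega
  have hmem : m ∈ Finset.Icc 1 N := by simp only [Finset.mem_Icc]; omega
  have hmem' : m ∈ Finset.Icc 1 (N-1) := by simp only [Finset.mem_Icc]; omega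
  have hsum1 : ∀ t : ℝ, (∑ n ∈ Finset.Icc 1 N, Function.update x m t n)
      = t + ∑ n ∈ (Finset.Icc 1 N).erase m, x n := by
    intro t
    rw [← Finset.add_sum_erase _ _ hmem, Function.update_self]
    congr 1
    exact Finset.sum_congr rfl fun n hn =>
      Function.update_of_ne (Finset.ne_of_mem_erase hn) _ _
  by_cases h2 : 2 ≤ m
  · have hm1mem : m - 1 ∈ ((Finset.Icc 1 (N-1)).erase m) := by
      simp only [Finset.mem_erase, Finset.mem_Icc]; omega
    refine ⟨(∑ n ∈ (Finset.Icc 1 N).erase m, x n) - ∑ n ∈ Finset.Icc 1 (N-1), y n,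
      Real.exp (y m - x (m+1)) + Real.exp (x (m-1) - y (m-1))
        + ∑ n ∈ ((Finset.Icc 1 (N-1)).erase m).erase (m-1),
            (Real.exp (y n - x (n+1)) + Real.exp (x n - y n)),
      Real.exp (y (m-1)), ?_, ?_⟩
    · intro s; rw [if_pos h2, ← Real.exp_add, sub_eq_add_neg]
    · intro t
      have hsum2 : (∑ n ∈ Finset.Icc 1 (N-1),
          (Real.exp (y n - Function.update x m t (n+1)) + Real.exp (Function.update x m t n - y n)))
        = (Real.exp (y m - x (m+1)) + Real.exp (t - y m))
          + ((Real.exp (y (m-1)) * Real.exp (-t) + Real.exp (x (m-1) - y (m-1)))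
          + ∑ n ∈ ((Finset.Icc 1 (N-1)).erase m).erase (m-1),
              (Real.exp (y n - x (n+1)) + Real.exp (x n - y n))) := by
        rw [← Finset.add_sum_erase _ _ hmem', ← Finset.add_sum_erase _ _ hm1mem]
        simp only [Function.update_apply]
        rw [if_pos trivial, if_neg (show m + 1 ≠ m by omega),
          if_neg (show m - 1 ≠ m by omega), if_pos (show m - 1 + 1 = m by omega)]
        rw [show y (m-1) - t = y (m-1) + (-t) by ring, Real.exp_add]
        congr 2
        refine Finset.sum_congr rfl fun n hn => ?_
        simp only [Finset.mem_erase, Finset.mem_Icc] at hn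
        rw [if_neg (show n + 1 ≠ m by omega), if_neg (show n ≠ m by omega)]
      rw [LamKer, hsum1, hsum2]
      congr 2
      · push_cast; ring
      · push_cast; ring
  · have hm1' : m = 1 := by omega
    subst hm1'
    refine ⟨(∑ n ∈ (Finset.Icc 1 N).erase 1, x n) - ∑ n ∈ Finset.Icc 1 (N-1), y n,
      Real.exp (y 1 - x 2)
        + ∑ n ∈ (Finset.Icc 1 (N-1)).erase 1,
            (Real.exp (y n - x (n+1)) + Real.exp (x n - y n)),
      0, ?_, ?_⟩
    · intro s; simp
    · intro t
      have hsum2 : (∑ n ∈ Finset.Icc 1 (N-1),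
          (Real.exp (y n - Function.update x 1 t (n+1)) + Real.exp (Function.update x 1 t n - y n)))
        = (Real.exp (y 1 - x 2) + Real.exp (t - y 1))
          + ∑ n ∈ (Finset.Icc 1 (N-1)).erase 1,
              (Real.exp (y n - x (n+1)) + Real.exp (x n - y n)) := by
        rw [← Finset.add_sum_erase _ _ hmem']
        simp only [Function.update_apply]
        rw [if_pos trivial, if_neg (show 1 + 1 ≠ 1 by omega)]
        congr 1
        refine Finset.sum_congr rfl fun n hn => ?_
        simp only [Finset.mem_erase, Finset.mem_Icc] at hn
        rw [if_neg (show n + 1 ≠ 1 by omega), if_neg (show n ≠ 1 by omega)]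
      rw [LamKer, hsum1, hsum2]
      congr 2
      · push_cast; ring
      · push_cast; ring

lemma LamKer_hasDerivAt (hbar : ℝ) (N : ℕ) (u : ℂ) (y x : ℕ → ℝ) (m : ℕ)
    (hm1 : 1 ≤ m) (hm : m ≤ N - 1) :
    HasDerivAt (fun t : ℝ => LamKer hbar N u y (Function.update x m t))
      ((Complex.I * u / hbar
        + ((1/hbar) * (if 2 ≤ m then Real.exp (y (m-1) - x m) else 0) : ℝ)
        - ((1/hbar) * Real.exp (x m - y m) : ℝ)) * LamKer hbar N u y x) (x m) := by
  obtain ⟨S, C, a, ha, h⟩ := LamKer_update hbar N u y x m hm1 hm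
  have hfun : (fun t : ℝ => LamKer hbar N u y (Function.update x m t))
      = fun t : ℝ => Complex.exp (Complex.I * u / hbar * ((S + t : ℝ) : ℂ)
            - (((1/hbar) * (C + a * Real.exp (-t) + Real.exp (t - y m)) : ℝ) : ℂ)) :=
    funext h
  rw [hfun]
  have h1 : HasDerivAt (fun t : ℝ => ((S + t : ℝ) : ℂ)) 1 (x m) := by
    simpa using ((hasDerivAt_id (x m)).const_add S).ofReal_comp
  have h2r : HasDerivAt (fun t : ℝ => (1/hbar) * (C + a * Real.exp (-t) + Real.exp (t - y m)))
      ((1/hbar) * (a * (-Real.exp (-(x m))) + Real.exp (x m - y m))) (x m) := by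
    have e1 : HasDerivAt (fun t : ℝ => Real.exp (-t)) (-Real.exp (-(x m))) (x m) := by
      simpa [Function.comp_def] using (Real.hasDerivAt_exp (-(x m))).comp (x m) ((hasDerivAt_id (x m)).neg)
    have e2 : HasDerivAt (fun t : ℝ => Real.exp (t - y m)) (Real.exp (x m - y m)) (x m) := by
      simpa [Function.comp_def] using (Real.hasDerivAt_exp (x m - y m)).comp (x m)
        ((hasDerivAt_id (x m)).sub_const (y m))
    exact (((e1.const_mul a).const_add C).add e2).const_mul (1/hbar)
  have hg : HasDerivAt (fun t : ℝ => Complex.I * u / hbar * ((S + t : ℝ) : ℂ)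
      - (((1/hbar) * (C + a * Real.exp (-t) + Real.exp (t - y m)) : ℝ) : ℂ))
      (Complex.I * u / hbar * 1
        - ((1/hbar) * (a * (-Real.exp (-(x m))) + Real.exp (x m - y m)) : ℝ)) (x m) :=
    (h1.const_mul _).sub h2r.ofReal_comp
  have hx : LamKer hbar N u y x
      = Complex.exp (Complex.I * u / hbar * ((S + x m : ℝ) : ℂ)
            - (((1/hbar) * (C + a * Real.exp (-(x m)) + Real.exp (x m - y m)) : ℝ) : ℂ)) := by
    have := h (x m)
    rwa [Function.update_eq_self] at this
  have := hg.cexp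
  convert this using 1
  rw [hx]
  have haa := congrArg (fun r : ℝ => (r : ℂ)) (ha (x m))
  push_cast [apply_ite (fun r : ℝ => (r : ℂ))] at haa ⊢
  rw [← haa]
  ring

lemma pOp_LamKer (hbar : ℝ) (hh : hbar ≠ 0) (u : ℂ) (N m : ℕ) (y x : ℕ → ℝ)
    (hm1 : 1 ≤ m) (hm : m ≤ N - 1) :
    pOp hbar m (LamKer hbar N u y) x
      = (u - Complex.I * (if 2 ≤ m then ((Real.exp (y (m-1) - x m) : ℝ) : ℂ) else 0)
          + Complex.I * (Real.exp (x m - y m) : ℝ)) * LamKer hbar N u y x := by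
  unfold pOp
  rw [(LamKer_hasDerivAt hbar N u y x m hm1 hm).deriv]
  have hb : (hbar : ℂ) ≠ 0 := by exact_mod_cast hh
  have hI : (Complex.I : ℂ)^2 = -1 := Complex.I_sq
  push_cast [apply_ite (fun r : ℝ => (r : ℂ))]
  field_simp
  ring_nf
  rw [Complex.I_sq]
  split_ifs <;> ring

lemma main_lemma (hbar : ℝ) (hh : 0 < hbar) (u : ℂ) (N : ℕ) (y : ℕ → ℝ) :
    ∀ m, m ≤ N - 1 → ∀ x : ℕ → ℝ,
      Aop hbar u m (LamKer hbar N u y) x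
        = (-Complex.I) ^ m * (Real.exp (∑ j ∈ Finset.Icc 1 m, (x j - y j)) : ℝ)
            * LamKer hbar N u y x := by
  intro m
  induction m using Nat.strong_induction_on with
  | _ m IH =>
    match m with
    | 0 =>
      intro _ x
      rw [show Aop hbar u 0 (LamKer hbar N u y) x = LamKer hbar N u y x from rfl]
      simp
    | 1 =>
      intro h1 x
      rw [Aop_succ', show Aop hbar u 0 (LamKer hbar N u y) = LamKer hbar N u y from rfl,
        Cop_zero', pOp_LamKer hbar hh.ne' u N 1 y x le_rfl h1, if_neg (by omega)]
      simp only [Finset.Icc_self, Finset.sum_singleton]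
      push_cast
      ring
    | (n+2) =>
      intro h2 x
      have hn1 : n + 1 ≤ N - 1 := by omega
      have hn : n ≤ N - 1 := by omega
      have hEfix : ∀ t : ℝ,
          (∑ j ∈ Finset.Icc 1 (n+1), (Function.update x (n+2) t j - y j))
            = ∑ j ∈ Finset.Icc 1 (n+1), (x j - y j) := by
        intro t
        refine Finset.sum_congr rfl fun j hj => ?_
        simp only [Finset.mem_Icc] at hj
        rw [Function.update_of_ne (by omega)]
      have hp : pOp hbar (n+2) (Aop hbar u (n+1) (LamKer hbar N u y)) x
          = ((-Complex.I)^(n+1) * (Real.exp (∑ j ∈ Finset.Icc 1 (n+1), (x j - y j)) : ℝ))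
              * pOp hbar (n+2) (LamKer hbar N u y) x := by
        unfold pOp
        have hfe : (fun t : ℝ =>
            Aop hbar u (n+1) (LamKer hbar N u y) (Function.update x (n+2) t))
            = fun t : ℝ => ((-Complex.I)^(n+1)
                * (Real.exp (∑ j ∈ Finset.Icc 1 (n+1), (x j - y j)) : ℝ))
                  * LamKer hbar N u y (Function.update x (n+2) t) := by
          funext t
          rw [IH (n+1) (by omega) hn1, hEfix t, mul_assoc]
        rw [hfe]
        rw [(((LamKer_hasDerivAt hbar N u y x (n+2) (by omega) (by omega)).const_mul
            ((-Complex.I)^(n+1) * (Real.exp (∑ j ∈ Finset.Icc 1 (n+1), (x j - y j)) : ℝ))).deriv),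
          (LamKer_hasDerivAt hbar N u y x (n+2) (by omega) (by omega)).deriv]
        ring
      rw [Aop_succ', Cop_succ', IH (n+1) (by omega) hn1 x, IH n (by omega) hn x, hp,
        pOp_LamKer hbar hh.ne' u N (n+2) y x (by omega) (by omega), if_pos (by omega)]
      simp only [show n + 2 - 1 = n + 1 from rfl]
      have hE2 : Real.exp (∑ j ∈ Finset.Icc 1 (n+2), (x j - y j))
          = Real.exp (∑ j ∈ Finset.Icc 1 (n+1), (x j - y j)) * Real.exp (x (n+2) - y (n+2)) := by
        rw [show (n+2) = (n+1) + 1 from rfl, Finset.sum_Icc_succ_top (by omega), Real.exp_add]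
      have hE1 : Real.exp (∑ j ∈ Finset.Icc 1 (n+1), (x j - y j))
          = Real.exp (∑ j ∈ Finset.Icc 1 n, (x j - y j)) * Real.exp (x (n+1) - y (n+1)) := by
        rw [Finset.sum_Icc_succ_top (by omega), Real.exp_add]
      have hc1 : ((Real.exp (x (n+1) - y (n+1)) : ℝ) : ℂ)
          * ((Real.exp (y (n+1) - x (n+2)) : ℝ) : ℂ)
          = ((Real.exp (x (n+1) - x (n+2)) : ℝ) : ℂ) := by
        norm_cast
        rw [← Real.exp_add]
        congr 1
        ring
      have hc2 : ((Real.exp (-(x (n+2))) : ℝ) : ℂ) * ((Real.exp (x (n+1)) : ℝ) : ℂ)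
          = ((Real.exp (x (n+1) - x (n+2)) : ℝ) : ℂ) := by
        norm_cast
        rw [← Real.exp_add]
        congr 1
        ring
      have hI : (Complex.I : ℂ)^2 = -1 := Complex.I_sq
      rw [hE2, hE1]
      simp only [Complex.ofReal_mul, Complex.ofReal_neg]
      set J := (-Complex.I)^n
      set E0 := ((Real.exp (∑ j ∈ Finset.Icc 1 n, (x j - y j)) : ℝ) : ℂ)
      set L := LamKer hbar N u y x
      set d := ((Real.exp (x (n+1) - x (n+2)) : ℝ) : ℂ)
      linear_combination (-(Complex.I^2) * (J * E0 * L)) * hc1 - (J * E0 * L) * hc2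
        - (J * E0 * L * d) * hI

theorem Aop_on_LamKer (hbar : ℝ) (hh : 0 < hbar) (u : ℂ) (N m : ℕ) (hN : 1 ≤ N)
    (hm : m ≤ N - 1) (y : ℕ → ℝ) :
    ∀ x : ℕ → ℝ,
      Aop hbar u m (LamKer hbar N u y) x
        = (-Complex.I) ^ m * (Real.exp (∑ j ∈ Finset.Icc 1 m, (x j - y j)) : ℝ)
            * LamKer hbar N u y x := by
  exact main_lemma hbar hh u N y m hm

end
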